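/- For a permutation w ∈ S_n, the following statements are equivalent: (1) B(w) is order-isomorphic to the boolean lattice of all subsets of some finite set; (2) every reduced word of w has no repeated letters; (3) there exists a reduced word of w with no repeated letters; (4) w avoids the patterns 321 and 3412. -/

import Mathlib

/-- The adjacent transposition `σ_i`, swapping `i` and `i+1` (acting on `ℕ`). -/
def sigmaT (i : ℕ) : Equiv.Perm ℕ := Equiv.swap i (i + 1)

/-- The permutation given by a word (product of simple reflections, composed as functions). -/
def wordProd (s : List ℕ) : Equiv.Perm ℕ := (s.map sigmaT).prod

/-- `s` is a word for `w` in `S_n`: all letters lie in `{1,…,n-1}` and the product is `w`. -/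
def IsWord (n : ℕ) (w : Equiv.Perm ℕ) (s : List ℕ) : Prop :=
  (∀ j ∈ s, 1 ≤ j ∧ j ≤ n - 1) ∧ wordProd s = w

/-- `s` is a reduced word for `w`: a word of minimal length. -/
def IsReducedWord (n : ℕ) (w : Equiv.Perm ℕ) (s : List ℕ) : Prop :=
  IsWord n w s ∧ ∀ t : List ℕ, IsWord n w t → s.length ≤ t.length

/-- The Coxeter length `ℓ(w)`. -/
noncomputable def ell (n : ℕ) (w : Equiv.Perm ℕ) : ℕ :=
  sInf {k | ∃ s : List ℕ, IsWord n w s ∧ s.length = k}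

/-- The support of `w`: letters appearing in reduced words of `w`. -/
def supp (n : ℕ) (w : Equiv.Perm ℕ) : Set ℕ :=
  {i | ∃ s : List ℕ, IsReducedWord n w s ∧ i ∈ s}

/-- Bruhat order: some reduced word of `v` is a subsequence of some reduced word of `w`. -/
def BruhatLE (n : ℕ) (v w : Equiv.Perm ℕ) : Prop :=
  ∃ s t : List ℕ, IsReducedWord n v s ∧ IsReducedWord n w t ∧ s.Sublist t

/-- The principal order ideal `B(w)`, as a type. -/
def IdealB (n : ℕ) (w : Equiv.Perm ℕ) : Type := {v : Equiv.Perm ℕ // BruhatLE n v w}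

/-- The Bruhat order restricted to `B(w)`. -/
def IdealLE (n : ℕ) (w : Equiv.Perm ℕ) (a b : IdealB n w) : Prop := BruhatLE n a.1 b.1

/-- Two relations are isomorphic (order isomorphism of the corresponding ordered sets). -/
def RelIsomorphic {α β : Type*} (ra : α → α → Prop) (rb : β → β → Prop) : Prop :=
  ∃ e : α ≃ β, ∀ a b : α, ra a b ↔ rb (e a) (e b)

/-- `w` is a prism: `B(w) ≅ C₂ × X` for some partially ordered set `X`
(the two-element chain `C₂` realized as `Bool`), with the componentwise order. -/
def IsPrism (n : ℕ) (w : Equiv.Perm ℕ) : Prop :=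
  ∃ (X : Type) (rX : X → X → Prop), IsPartialOrder X rX ∧
    RelIsomorphic (IdealLE n w)
      (fun p q : Bool × X => (p.1 ≤ q.1) ∧ rX p.2 q.2)

/-- `w` belongs to `S_n`: it fixes every point outside `{1,…,n}`. -/
def MemSymm (n : ℕ) (w : Equiv.Perm ℕ) : Prop :=
  ∀ x : ℕ, x ∉ Set.Icc 1 n → w x = x

/-- `i` is unconfined in the word `s`: it appears exactly once, not between two copies
of `i+1` and not between two copies of `i-1`. -/
def Unconfined (i : ℕ) (s : List ℕ) : Prop :=
  s.count i = 1 ∧ ∀ a b : List ℕ, s = a ++ i :: b →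
    ¬((i + 1) ∈ a ∧ (i + 1) ∈ b) ∧ ¬((i - 1) ∈ a ∧ (i - 1) ∈ b)

/-- `B(w) ≅ C₂ × B(v)` with the componentwise order. -/
def IsoC2TimesIdeal (n : ℕ) (w v : Equiv.Perm ℕ) : Prop :=
  RelIsomorphic (IdealLE n w)
    (fun p q : Bool × IdealB n v => (p.1 ≤ q.1) ∧ IdealLE n v p.2 q.2)


section AUX
lemma sigmaT_apply (i x : ℕ) : sigmaT i x = if x = i then i + 1 else if x = i + 1 then i else x := by
  simp [sigmaT, Equiv.swap_apply_def]

lemma sigmaT_sq (i : ℕ) : sigmaT i * sigmaT i = 1 := Equiv.swap_mul_self _ _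

lemma sigmaT_ne_one (i : ℕ) : sigmaT i ≠ 1 := by
  intro h
  have h2 : sigmaT i i = i + 1 := by rw [sigmaT_apply]; simp
  rw [h, Equiv.Perm.one_apply] at h2; omega

@[simp] lemma wordProd_nil : wordProd [] = 1 := rfl

lemma wordProd_cons (a : ℕ) (s : List ℕ) : wordProd (a :: s) = sigmaT a * wordProd s := by
  simp [wordProd]

lemma wordProd_append (s t : List ℕ) : wordProd (s ++ t) = wordProd s * wordProd t := by
  simp [wordProd]

lemma wordProd_singleton (a : ℕ) : wordProd [a] = sigmaT a := by
  simp [wordProd]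

theorem Equiv.Perm.apply_inv_self {α : Type*} (f : Equiv.Perm α) (x : α) : f (f⁻¹ x) = x :=
  Equiv.apply_symm_apply f x

theorem Equiv.Perm.inv_apply_self {α : Type*} (f : Equiv.Perm α) (x : α) : f⁻¹ (f x) = x :=
  Equiv.symm_apply_apply f x

lemma memSymm_one (n : ℕ) : MemSymm n 1 := fun x _ => rfl

lemma memSymm_mul {n : ℕ} {u v : Equiv.Perm ℕ} (hu : MemSymm n u) (hv : MemSymm n v) :
    MemSymm n (u * v) := by
  intro x hx
  rw [Equiv.Perm.mul_apply, hv x hx, hu x hx]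

lemma memSymm_sigmaT {n i : ℕ} (h1 : 1 ≤ i) (h2 : i + 1 ≤ n) : MemSymm n (sigmaT i) := by
  intro x hx
  simp only [Set.mem_Icc, not_and_or, not_le] at hx
  rw [sigmaT_apply]
  split_ifs <;> omega

lemma memSymm_inv {n : ℕ} {w : Equiv.Perm ℕ} (hw : MemSymm n w) : MemSymm n w⁻¹ := by
  intro x hx
  have := hw x hx
  calc w⁻¹ x = w⁻¹ (w x) := by rw [this]
  _ = x := Equiv.Perm.inv_apply_self w x

lemma memSymm_wordProd {n : ℕ} {s : List ℕ} (h : ∀ j ∈ s, 1 ≤ j ∧ j ≤ n - 1) :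
    MemSymm n (wordProd s) := by
  induction s with
  | nil => exact memSymm_one n
  | cons a t ih =>
    rw [wordProd_cons]
    have ha := h a (by simp)
    exact memSymm_mul (memSymm_sigmaT ha.1 (by omega)) (ih fun j hj => h j (by simp [hj]))

/-- permutations preserving an initial segment downward also preserve it upward -/
lemma pres_apply_iff {i : ℕ} {w : Equiv.Perm ℕ} (h : ∀ x, x ≤ i → w x ≤ i) :
    ∀ x, w x ≤ i ↔ x ≤ i := by
  have himg : (Finset.Iic i).image w = Finset.Iic i := by
    apply Finset.eq_of_subset_of_card_le
    · intro y hy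
      simp only [Finset.mem_image, Finset.mem_Iic] at hy ⊢
      obtain ⟨x, hx, rfl⟩ := hy
      exact h x hx
    · rw [Finset.card_image_of_injective _ w.injective]
  intro x
  constructor
  · intro hx
    have : w x ∈ (Finset.Iic i).image w := by rw [himg]; simpa using hx
    simp only [Finset.mem_image, Finset.mem_Iic] at this
    obtain ⟨x', hx', he⟩ := this
    rwa [← w.injective he]
  · exact h x

lemma pres_wordProd {i : ℕ} {s : List ℕ} (h : ∀ j ∈ s, j ≠ i) :
    ∀ x, wordProd s x ≤ i ↔ x ≤ i := by
  apply pres_apply_iff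
  induction s with
  | nil => intro x hx; simpa using hx
  | cons a t ih =>
    intro x hx
    rw [wordProd_cons, Equiv.Perm.mul_apply]
    have hti : ∀ j ∈ t, j ≠ i := fun j hj => h j (by simp [hj])
    have hx' : wordProd t x ≤ i := ih hti x hx
    have ha : a ≠ i := h a (by simp)
    rw [sigmaT_apply]
    split_ifs <;> omega

lemma pres_inv {i : ℕ} {w : Equiv.Perm ℕ} (h : ∀ x, w x ≤ i ↔ x ≤ i) :
    ∀ x, w⁻¹ x ≤ i ↔ x ≤ i := by
  intro x
  constructor
  · intro hx
    have := (h (w⁻¹ x)).mpr hx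
    rwa [Equiv.Perm.apply_inv_self] at this
  · intro hx
    rw [← Equiv.Perm.apply_inv_self w x] at hx
    exact (h _).mp hx

section INV

/-- inversion pairs of `w` inside `[1,n]` -/
def invs (n : ℕ) (w : Equiv.Perm ℕ) : Finset (ℕ × ℕ) :=
  (Finset.Icc 1 n ×ˢ Finset.Icc 1 n).filter fun p => p.1 < p.2 ∧ w p.2 < w p.1

/-- the number of inversions -/
def invc (n : ℕ) (w : Equiv.Perm ℕ) : ℕ := (invs n w).card

lemma mem_invs {n : ℕ} {w : Equiv.Perm ℕ} {p : ℕ × ℕ} :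
    p ∈ invs n w ↔ (1 ≤ p.1 ∧ p.1 ≤ n) ∧ (1 ≤ p.2 ∧ p.2 ≤ n) ∧ p.1 < p.2 ∧ w p.2 < w p.1 := by
  simp [invs, and_assoc]

/-- a MemSymm permutation maps [1,n] to [1,n] -/
lemma memSymm_le {n : ℕ} {w : Equiv.Perm ℕ} (hw : MemSymm n w) {x : ℕ}
    (h1 : 1 ≤ x) (h2 : x ≤ n) : 1 ≤ w x ∧ w x ≤ n := by
  constructor
  · rcases Nat.eq_zero_or_pos (w x) with h | h
    · exfalso
      have h0 : w 0 = 0 := hw 0 (by simp)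
      have := w.injective (h.trans h0.symm)
      omega
    · exact h
  · by_contra hgt
    push_neg at hgt
    have : w (w x) = w x := hw (w x) (by simp; omega)
    have := w.injective this
    omega

lemma invc_mul_sigma_asc {n i : ℕ} {w : Equiv.Perm ℕ} (hw : MemSymm n w)
    (h1 : 1 ≤ i) (h2 : i + 1 ≤ n) (hasc : w i < w (i + 1)) :
    invc n (w * sigmaT i) = invc n w + 1 := by
  classical
  have mem_invs' : ∀ (v : Equiv.Perm ℕ) (a b : ℕ), ((a, b) ∈ invs n v ↔
      (1 ≤ a ∧ a ≤ n) ∧ (1 ≤ b ∧ b ≤ n) ∧ a < b ∧ v b < v a) := by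
    intro v a b; simp [invs, and_assoc]
  have key : ((invs n (w * sigmaT i)).erase (i, i+1)).card
      = ((invs n w).erase (i, i+1)).card := by
    apply Finset.card_bij' (fun p _ => (sigmaT i p.1, sigmaT i p.2))
      (fun p _ => (sigmaT i p.1, sigmaT i p.2))
    · intro p hp
      simp only [Finset.mem_erase, mem_invs] at hp ⊢
      obtain ⟨hpq, ⟨ha1, ha2⟩, ⟨hb1, hb2⟩, hab, hv⟩ := hp
      have hne : ¬(p.1 = i ∧ p.2 = i + 1) := by
        intro ⟨u1, u2⟩
        exact hpq (Prod.ext u1 u2)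
      rw [Equiv.Perm.mul_apply, Equiv.Perm.mul_apply] at hv
      have e1 := sigmaT_apply i p.1
      have e2 := sigmaT_apply i p.2
      constructor
      · intro hcon
        have c1 : sigmaT i p.1 = i := congrArg Prod.fst hcon
        have c2 : sigmaT i p.2 = i + 1 := congrArg Prod.snd hcon
        rw [e1] at c1; rw [e2] at c2
        split_ifs at c1 c2 <;> omega
      refine ⟨?_, ?_, ?_, hv⟩
      · rw [e1]; split_ifs <;> omega
      · rw [e2]; split_ifs <;> omega
      · rw [e1, e2]; split_ifs <;> omega
    · intro p hp
      simp only [Finset.mem_erase, mem_invs] at hp ⊢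
      obtain ⟨hpq, ⟨ha1, ha2⟩, ⟨hb1, hb2⟩, hab, hv⟩ := hp
      have hne : ¬(p.1 = i ∧ p.2 = i + 1) := by
        intro ⟨u1, u2⟩
        exact hpq (Prod.ext u1 u2)
      have e1 := sigmaT_apply i p.1
      have e2 := sigmaT_apply i p.2
      constructor
      · intro hcon
        have c1 : sigmaT i p.1 = i := congrArg Prod.fst hcon
        have c2 : sigmaT i p.2 = i + 1 := congrArg Prod.snd hcon
        rw [e1] at c1; rw [e2] at c2
        split_ifs at c1 c2 <;> omega
      refine ⟨?_, ?_, ?_, ?_⟩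
      · rw [e1]; split_ifs <;> omega
      · rw [e2]; split_ifs <;> omega
      · rw [e1, e2]; split_ifs <;> omega
      · rw [Equiv.Perm.mul_apply, Equiv.Perm.mul_apply]
        have s1 : sigmaT i (sigmaT i p.1) = p.1 := by
          rw [sigmaT_apply, sigmaT_apply]; split_ifs <;> omega
        have s2 : sigmaT i (sigmaT i p.2) = p.2 := by
          rw [sigmaT_apply, sigmaT_apply]; split_ifs <;> omega
        rw [s1, s2]; exact hv
    · intro p _
      have s1 : sigmaT i (sigmaT i p.1) = p.1 := by
        rw [sigmaT_apply, sigmaT_apply]; split_ifs <;> omega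
      have s2 : sigmaT i (sigmaT i p.2) = p.2 := by
        rw [sigmaT_apply, sigmaT_apply]; split_ifs <;> omega
      simp [s1, s2]
    · intro p _
      have s1 : sigmaT i (sigmaT i p.1) = p.1 := by
        rw [sigmaT_apply, sigmaT_apply]; split_ifs <;> omega
      have s2 : sigmaT i (sigmaT i p.2) = p.2 := by
        rw [sigmaT_apply, sigmaT_apply]; split_ifs <;> omega
      simp [s1, s2]
  have hqA : (i, i+1) ∈ invs n (w * sigmaT i) := by
    rw [mem_invs']
    refine ⟨⟨h1, by omega⟩, ⟨by omega, h2⟩, by omega, ?_⟩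
    rw [Equiv.Perm.mul_apply, Equiv.Perm.mul_apply]
    have e1 : sigmaT i i = i + 1 := by rw [sigmaT_apply]; simp
    have e2 : sigmaT i (i+1) = i := by rw [sigmaT_apply]; split_ifs <;> omega
    rw [e1, e2]
    exact hasc
  have hqB : (i, i+1) ∉ invs n w := by
    rw [mem_invs']
    push_neg
    intro _ _ _
    omega
  unfold invc
  rw [← Finset.card_erase_add_one hqA, key, Finset.erase_eq_of_notMem hqB]

lemma invc_mul_sigma_desc {n i : ℕ} {w : Equiv.Perm ℕ} (hw : MemSymm n w)
    (h1 : 1 ≤ i) (h2 : i + 1 ≤ n) (hdesc : w (i + 1) < w i) :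
    invc n w = invc n (w * sigmaT i) + 1 := by
  have hws : MemSymm n (w * sigmaT i) := by
    intro x hx
    rw [Equiv.Perm.mul_apply]
    have hs : sigmaT i x = x := by
      simp only [Set.mem_Icc, not_and_or, not_le] at hx
      rw [sigmaT_apply]; split_ifs <;> omega
    rw [hs]
    exact hw x hx
  have e1 : (w * sigmaT i) i = w (i+1) := by
    rw [Equiv.Perm.mul_apply, sigmaT_apply]; simp
  have e2 : (w * sigmaT i) (i+1) = w i := by
    rw [Equiv.Perm.mul_apply, sigmaT_apply]; split_ifs <;> omega
  have hasc : (w * sigmaT i) i < (w * sigmaT i) (i+1) := by rw [e1, e2]; exact hdesc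
  have := invc_mul_sigma_asc hws h1 h2 hasc
  have hww : w * sigmaT i * sigmaT i = w := by
    rw [mul_assoc, sigmaT_sq, mul_one]
  rw [hww] at this
  omega

lemma invc_inv {n : ℕ} {w : Equiv.Perm ℕ} (hw : MemSymm n w) : invc n w⁻¹ = invc n w := by
  classical
  unfold invc
  apply Finset.card_bij' (fun p _ => (w⁻¹ p.2, w⁻¹ p.1)) (fun p _ => (w p.2, w p.1))
  · intro p hp
    rw [mem_invs] at hp ⊢
    obtain ⟨⟨ha1, ha2⟩, ⟨hb1, hb2⟩, hab, hv⟩ := hp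
    have m1 := memSymm_le (memSymm_inv hw) hb1 hb2
    have m2 := memSymm_le (memSymm_inv hw) ha1 ha2
    refine ⟨m1, m2, hv, ?_⟩
    rw [Equiv.Perm.apply_inv_self, Equiv.Perm.apply_inv_self]
    exact hab
  · intro p hp
    rw [mem_invs] at hp ⊢
    obtain ⟨⟨ha1, ha2⟩, ⟨hb1, hb2⟩, hab, hv⟩ := hp
    have m1 := memSymm_le hw hb1 hb2
    have m2 := memSymm_le hw ha1 ha2
    refine ⟨m1, m2, hv, ?_⟩
    rw [Equiv.Perm.inv_apply_self, Equiv.Perm.inv_apply_self]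
    exact hab
  · intro p _; simp
  · intro p _; simp

end INV

section S3

lemma eq_one_of_no_descent {n : ℕ} {w : Equiv.Perm ℕ} (hw : MemSymm n w)
    (h : ∀ i, 1 ≤ i → i + 1 ≤ n → w i < w (i + 1)) : w = 1 := by
  have mono : ∀ d x, 1 ≤ x → x + d ≤ n → w x + d ≤ w (x + d) := by
    intro d
    induction d with
    | zero => intro x _ _; simp
    | succ d ih =>
      intro x hx hxd
      have h1 := ih x hx (by omega)
      have h2 := h (x + d) (by omega) (by omega)
      have h3 : x + (d + 1) = (x + d) + 1 := by omega
      rw [h3]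
      omega
  have lower : ∀ x, 1 ≤ x → x ≤ n → x ≤ w x := by
    intro x hx1 hx2
    obtain ⟨d, rfl⟩ : ∃ d, x = 1 + d := ⟨x - 1, by omega⟩
    have h1 := mono d 1 le_rfl (by omega)
    have h2 := (memSymm_le hw le_rfl (by omega)).1
    omega
  have fix : ∀ k x, 1 ≤ x → x ≤ n → n ≤ x + k → w x = x := by
    intro k
    induction k with
    | zero =>
      intro x h1 h2 h3
      have := lower x h1 h2
      have := (memSymm_le hw h1 h2).2
      omega
    | succ k ih =>
      intro x h1 h2 h3
      by_cases hc : n ≤ x + k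
      · exact ih x h1 h2 hc
      · have hlow := lower x h1 h2
        rcases Nat.lt_or_ge x (w x) with hlt | hge
        · exfalso
          set y := w x with hy
          have hy1 : 1 ≤ y := by omega
          have hy2 : y ≤ n := (memSymm_le hw h1 h2).2
          have := ih y (by omega) hy2 (by omega)
          have := w.injective (this.trans hy)
          omega
        · omega
  ext x
  by_cases hx : x ∈ Set.Icc 1 n
  · simp only [Set.mem_Icc] at hx
    simpa using fix n x hx.1 hx.2 (by omega)
  · simpa using hw x hx

lemma exists_descent {n : ℕ} {w : Equiv.Perm ℕ} (hw : MemSymm n w) (hne : w ≠ 1) :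
    ∃ i, 1 ≤ i ∧ i + 1 ≤ n ∧ w (i + 1) < w i := by
  by_contra hcon
  push_neg at hcon
  apply hne
  apply eq_one_of_no_descent hw
  intro i h1 h2
  have hne2 : w i ≠ w (i + 1) := fun he => by
    have := w.injective he; omega
  have := hcon i h1 h2
  omega

lemma invc_one (n : ℕ) : invc n 1 = 0 := by
  unfold invc invs
  rw [Finset.card_eq_zero, Finset.filter_false_of_mem]
  intro p _
  simp only [Equiv.Perm.one_apply]
  omega

lemma eq_one_of_invc_eq_zero {n : ℕ} {w : Equiv.Perm ℕ} (hw : MemSymm n w)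
    (h : invc n w = 0) : w = 1 := by
  by_contra hne
  obtain ⟨i, h1, h2, hd⟩ := exists_descent hw hne
  have : (i, i + 1) ∈ invs n w := by
    unfold invs
    simp only [Finset.mem_filter, Finset.mem_product, Finset.mem_Icc]
    exact ⟨⟨⟨h1, by omega⟩, ⟨by omega, h2⟩⟩, by omega, hd⟩
  have : 0 < invc n w := Finset.card_pos.mpr ⟨_, this⟩
  omega

lemma invc_mul_sigma_le {n i : ℕ} {w : Equiv.Perm ℕ} (hw : MemSymm n w)
    (h1 : 1 ≤ i) (h2 : i + 1 ≤ n) : invc n (w * sigmaT i) ≤ invc n w + 1 := by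
  rcases lt_trichotomy (w i) (w (i + 1)) with hlt | heq | hgt
  · rw [invc_mul_sigma_asc hw h1 h2 hlt]
  · exact absurd (w.injective heq) (by omega)
  · have := invc_mul_sigma_desc hw h1 h2 hgt
    omega

lemma invc_mul_word_le {n : ℕ} {w : Equiv.Perm ℕ} {s : List ℕ} (hw : MemSymm n w)
    (hs : ∀ j ∈ s, 1 ≤ j ∧ j ≤ n - 1) :
    invc n (w * wordProd s) ≤ invc n w + s.length := by
  induction s generalizing w with
  | nil => simp [show wordProd [] = (1 : Equiv.Perm ℕ) from rfl]
  | cons a t ih =>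
    have ha := hs a (by simp)
    have ha2 : a + 1 ≤ n := by omega
    rw [wordProd_cons, ← mul_assoc]
    have hw' : MemSymm n (w * sigmaT a) := memSymm_mul hw (memSymm_sigmaT ha.1 ha2)
    have := ih hw' (fun j hj => hs j (by simp [hj]))
    have := invc_mul_sigma_le hw ha.1 ha2
    simp only [List.length_cons]
    omega

lemma invc_wordProd_le {n : ℕ} {s : List ℕ} (hs : ∀ j ∈ s, 1 ≤ j ∧ j ≤ n - 1) :
    invc n (wordProd s) ≤ s.length := by
  have := invc_mul_word_le (memSymm_one n) hs
  rwa [one_mul, invc_one, zero_add] at this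

lemma exists_word_length_invc {n : ℕ} {w : Equiv.Perm ℕ} (hw : MemSymm n w) :
    ∃ s, (∀ j ∈ s, 1 ≤ j ∧ j ≤ n - 1) ∧ wordProd s = w ∧ s.length = invc n w := by
  suffices H : ∀ k (w : Equiv.Perm ℕ), MemSymm n w → invc n w = k →
      ∃ s, (∀ j ∈ s, 1 ≤ j ∧ j ≤ n - 1) ∧ wordProd s = w ∧ s.length = invc n w by
    exact H _ w hw rfl
  intro k
  induction k using Nat.strong_induction_on with
  | _ k IH =>
    intro w hw hk
    by_cases h1 : w = 1
    · subst h1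
      exact ⟨[], by simp, rfl, by rw [invc_one]; rfl⟩
    · obtain ⟨i, hi1, hi2, hd⟩ := exists_descent hw h1
      have hdec := invc_mul_sigma_desc hw hi1 hi2 hd
      have hw' : MemSymm n (w * sigmaT i) := memSymm_mul hw (memSymm_sigmaT hi1 hi2)
      obtain ⟨s', hb', hp', hl'⟩ := IH (invc n (w * sigmaT i)) (by omega) _ hw' rfl
      refine ⟨s' ++ [i], ?_, ?_, ?_⟩
      · intro j hj
        rcases List.mem_append.mp hj with h | h
        · exact hb' j h
        · simp at h; subst h; exact ⟨hi1, by omega⟩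
      · rw [wordProd_append, hp', wordProd_singleton, mul_assoc, sigmaT_sq, mul_one]
      · simp [hl']; omega

lemma reduced_iff {n : ℕ} {w : Equiv.Perm ℕ} {s : List ℕ} :
    IsReducedWord n w s ↔ IsWord n w s ∧ s.length = invc n w := by
  constructor
  · rintro ⟨hword, hmin⟩
    refine ⟨hword, ?_⟩
    have hw : MemSymm n w := hword.2 ▸ memSymm_wordProd hword.1
    obtain ⟨t, hb, hp, hl⟩ := exists_word_length_invc hw
    have h1 := hmin t ⟨hb, hp⟩
    have h2 : invc n w ≤ s.length := by
      have := invc_wordProd_le hword.1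
      rwa [hword.2] at this
    omega
  · rintro ⟨hword, hlen⟩
    refine ⟨hword, fun t ht => ?_⟩
    have := invc_wordProd_le ht.1
    rw [ht.2] at this
    omega

lemma nodup_isReduced {n : ℕ} {s : List ℕ} (hs : ∀ j ∈ s, 1 ≤ j ∧ j ≤ n - 1)
    (hn : s.Nodup) : IsReducedWord n (wordProd s) s := by
  rw [reduced_iff]
  refine ⟨⟨hs, rfl⟩, ?_⟩
  induction s using List.reverseRecOn with
  | nil => rw [show wordProd [] = (1 : Equiv.Perm ℕ) from rfl, invc_one]; rfl
  | append_singleton t i ih =>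
    have hti : ∀ j ∈ t, j ≠ i := by
      intro j hj
      intro he
      subst he
      exact (List.disjoint_of_nodup_append hn) hj (by simp)
    have htn : t.Nodup := (List.nodup_append.mp hn).1
    have htb : ∀ j ∈ t, 1 ≤ j ∧ j ≤ n - 1 := fun j hj => hs j (by simp [hj])
    have hi := hs i (by simp)
    have hpres := pres_wordProd hti
    have hasc : wordProd t i < wordProd t (i + 1) := by
      have e1 : wordProd t i ≤ i := (hpres i).mpr le_rfl
      have e2 : ¬ wordProd t (i + 1) ≤ i := fun hcon => by
        have := (hpres (i + 1)).mp hcon; omega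
      omega
    rw [wordProd_append, wordProd_singleton,
      invc_mul_sigma_asc (memSymm_wordProd htb) hi.1 (by omega) hasc]
    simp [ih htb htn]
end S3

section S4

/-- `w` does not preserve the initial segment `[0,i]` -/
def Dp (w : Equiv.Perm ℕ) (i : ℕ) : Prop := ¬ ∀ x, x ≤ i → w x ≤ i

lemma not_Dp_one (i : ℕ) : ¬ Dp 1 i := by
  intro h
  exact h (fun x hx => by simpa using hx)

lemma sigma_le_iff {k i : ℕ} (h : k ≠ i) : ∀ y, sigmaT k y ≤ i ↔ y ≤ i := by
  intro y; rw [sigmaT_apply]; split_ifs <;> omega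

lemma take_reduced {n : ℕ} {w : Equiv.Perm ℕ} {s : List ℕ} (hs : IsReducedWord n w s)
    (k : ℕ) : IsReducedWord n (wordProd (s.take k)) (s.take k) := by
  have hb := hs.1.1
  have hp := hs.1.2
  have hlen : s.length = invc n w := (reduced_iff.mp hs).2
  have hbt : ∀ j ∈ s.take k, 1 ≤ j ∧ j ≤ n - 1 := fun j hj => hb j (List.take_subset k s hj)
  have hbd : ∀ j ∈ s.drop k, 1 ≤ j ∧ j ≤ n - 1 := fun j hj => hb j (List.drop_subset k s hj)
  rw [reduced_iff]
  refine ⟨⟨hbt, rfl⟩, ?_⟩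
  have h1 : invc n (wordProd (s.take k)) ≤ (s.take k).length := invc_wordProd_le hbt
  have h2 : invc n w ≤ invc n (wordProd (s.take k)) + (s.drop k).length := by
    have := invc_mul_word_le (memSymm_wordProd hbt) hbd
    rw [← wordProd_append, List.take_append_drop, hp] at this
    exact this
  have h3 : (s.take k).length + (s.drop k).length = s.length := by
    rw [← List.length_append, List.take_append_drop]
  omega

/-- support invariance: the letters of a reduced word are exactly `Dp w` -/
lemma letters_reduced {n : ℕ} {s : List ℕ} (hs : IsReducedWord n (wordProd s) s) :
    ∀ i, i ∈ s ↔ Dp (wordProd s) i := by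
  induction s using List.reverseRecOn with
  | nil =>
    intro i
    simp only [List.not_mem_nil, false_iff]
    exact not_Dp_one i
  | append_singleton t k IH =>
    intro i
    have htred : IsReducedWord n (wordProd t) t := by
      have := take_reduced hs t.length
      rwa [List.take_left] at this
    have hlent : t.length = invc n (wordProd t) := (reduced_iff.mp htred).2
    have hlens : t.length + 1 = invc n (wordProd (t ++ [k])) := by
      have := (reduced_iff.mp hs).2
      simpa using this
    have hb := (reduced_iff.mp hs).1.1
    have hk := hb k (by simp)
    have hk2 : k + 1 ≤ n := by omega
    have htb : ∀ j ∈ t, 1 ≤ j ∧ j ≤ n - 1 := fun j hj => hb j (by simp [hj])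
    have hmt : MemSymm n (wordProd t) := memSymm_wordProd htb
    set w := wordProd (t ++ [k]) with hw
    have hwp : w = wordProd t * sigmaT k := by rw [hw, wordProd_append, wordProd_singleton]
    -- ascent of (wordProd t) at k
    have hasc : wordProd t k < wordProd t (k + 1) := by
      rcases lt_trichotomy (wordProd t k) (wordProd t (k + 1)) with h | h | h
      · exact h
      · exact absurd ((wordProd t).injective h) (by omega)
      · exfalso
        have := invc_mul_sigma_desc hmt hk.1 hk2 h
        rw [← hwp] at this
        omega
    have hWdesc : w (k + 1) < w k := by
      have e1 : w k = wordProd t (k + 1) := by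
        rw [hwp, Equiv.Perm.mul_apply, sigmaT_apply]; simp
      have e2 : w (k + 1) = wordProd t k := by
        rw [hwp, Equiv.Perm.mul_apply, sigmaT_apply]; split_ifs <;> omega
      rw [e1, e2]; exact hasc
    have hDk : Dp w k := by
      intro hcon
      have hiff := pres_apply_iff hcon
      have h1 : w k ≤ k := hcon k le_rfl
      have h2 : w (k + 1) ≤ k := by omega
      have := (hiff (k + 1)).mp h2
      omega
    rcases eq_or_ne i k with rfl | hik
    · simp [hDk]
    · have step : Dp w i ↔ Dp (wordProd t) i := by
        have hwt : wordProd t = w * sigmaT k := by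
          rw [hwp, mul_assoc, sigmaT_sq, mul_one]
        constructor
        · intro hDw
          intro hcon
          apply hDw
          intro x hx
          rw [hwp, Equiv.Perm.mul_apply]
          exact hcon _ ((sigma_le_iff hik.symm x).mpr hx)
        · intro hDt
          intro hcon
          apply hDt
          intro x hx
          rw [hwt, Equiv.Perm.mul_apply]
          exact hcon _ ((sigma_le_iff hik.symm x).mpr hx)
      rw [step, ← IH htred]
      simp [hik]

lemma letters_eq_of_reduced {n : ℕ} {w : Equiv.Perm ℕ} {s t : List ℕ}
    (hs : IsReducedWord n w s) (ht : IsReducedWord n w t) : s.toFinset = t.toFinset := by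
  have hps : wordProd s = w := hs.1.2
  have hpt : wordProd t = w := ht.1.2
  ext i
  simp only [List.mem_toFinset]
  rw [letters_reduced (hps ▸ hs), letters_reduced (hpt ▸ ht), hps, hpt]

lemma nodup_of_exists_nodup {n : ℕ} {w : Equiv.Perm ℕ}
    (hex : ∃ s, IsReducedWord n w s ∧ s.Nodup) {t : List ℕ}
    (ht : IsReducedWord n w t) : t.Nodup := by
  obtain ⟨s, hs, hsn⟩ := hex
  have hsets := letters_eq_of_reduced hs ht
  have hlens : s.length = invc n w := (reduced_iff.mp hs).2
  have hlent : t.length = invc n w := (reduced_iff.mp ht).2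
  have hcard : t.toFinset.card = t.length := by
    rw [← hsets, List.toFinset_card_of_nodup hsn, hlens, hlent]
  rw [List.card_toFinset] at hcard
  have hsub : t.dedup.Sublist t := List.dedup_sublist t
  have : t.dedup = t := hsub.eq_of_length hcard
  rw [← this]
  exact List.nodup_dedup t

end S4

section S5

lemma step321 {i a1 a2 a3 x1 x2 x3 : ℕ}
    (h12 : x1 < x2) (h23 : x2 < x3)
    (p1 : a1 ≤ i ↔ x1 ≤ i) (p2 : a2 ≤ i ↔ x2 ≤ i) (p3 : a3 ≤ i ↔ x3 ≤ i)
    (d21 : sigmaT i a2 < sigmaT i a1) (d32 : sigmaT i a3 < sigmaT i a2) :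
    a3 < a2 ∧ a2 < a1 := by
  simp only [sigmaT_apply] at d21 d32
  split_ifs at d21 d32 <;> omega

lemma step3412 {i a1 a2 a3 a4 x1 x2 x3 x4 : ℕ}
    (h12 : x1 < x2) (h23 : x2 < x3) (h34 : x3 < x4)
    (p1 : a1 ≤ i ↔ x1 ≤ i) (p2 : a2 ≤ i ↔ x2 ≤ i) (p3 : a3 ≤ i ↔ x3 ≤ i)
    (p4 : a4 ≤ i ↔ x4 ≤ i)
    (q1 : sigmaT i a3 < sigmaT i a4) (q2 : sigmaT i a4 < sigmaT i a1)
    (q3 : sigmaT i a1 < sigmaT i a2) :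
    a3 < a4 ∧ a4 < a1 ∧ a1 < a2 := by
  simp only [sigmaT_apply] at q1 q2 q3
  split_ifs at q1 q2 q3 <;> omega

lemma noPattern_of_nodup {s : List ℕ} (hn : s.Nodup) :
    (∀ x1 x2 x3 : ℕ, x1 < x2 → x2 < x3 →
      ¬(wordProd s x3 < wordProd s x2 ∧ wordProd s x2 < wordProd s x1)) ∧
    (∀ x1 x2 x3 x4 : ℕ, x1 < x2 → x2 < x3 → x3 < x4 →
      ¬(wordProd s x3 < wordProd s x4 ∧ wordProd s x4 < wordProd s x1 ∧
        wordProd s x1 < wordProd s x2)) := by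
  induction s with
  | nil =>
    constructor
    · intro x1 x2 x3 h12 h23 ⟨d1, d2⟩
      simp only [show wordProd [] = (1 : Equiv.Perm ℕ) from rfl, Equiv.Perm.one_apply] at d1 d2
      omega
    · intro x1 x2 x3 x4 h12 h23 h34 ⟨d1, d2, d3⟩
      simp only [show wordProd [] = (1 : Equiv.Perm ℕ) from rfl, Equiv.Perm.one_apply] at d1 d2 d3
      omega
  | cons i t IH =>
    rw [List.nodup_cons] at hn
    obtain ⟨hit, htn⟩ := hn
    have IHt := IH htn
    have hpres : ∀ x, wordProd t x ≤ i ↔ x ≤ i :=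
      pres_wordProd (fun j hj he => hit (he ▸ hj))
    constructor
    · intro x1 x2 x3 h12 h23 ⟨d1, d2⟩
      rw [wordProd_cons, Equiv.Perm.mul_apply, Equiv.Perm.mul_apply] at d1 d2
      have := step321 h12 h23 (hpres x1) (hpres x2) (hpres x3) d2 d1
      exact (IHt.1 x1 x2 x3 h12 h23) ⟨this.1, this.2⟩
    · intro x1 x2 x3 x4 h12 h23 h34 ⟨d1, d2, d3⟩
      rw [wordProd_cons, Equiv.Perm.mul_apply, Equiv.Perm.mul_apply] at d1 d2 d3
      have := step3412 h12 h23 h34 (hpres x1) (hpres x2) (hpres x3) (hpres x4) d1 d2 d3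
      exact (IHt.2 x1 x2 x3 x4 h12 h23 h34) ⟨this.1, this.2.1, this.2.2⟩

end S5

section S6

lemma wordProd_range'_apply (a m x : ℕ) :
    wordProd (List.range' a m) x =
      if a ≤ x ∧ x < a + m then x + 1 else if x = a + m then a else x := by
  induction m generalizing a with
  | zero =>
    simp only [List.range'_zero, show wordProd [] = (1 : Equiv.Perm ℕ) from rfl,
      Equiv.Perm.one_apply]
    split_ifs <;> omega
  | succ m ih =>
    rw [List.range'_succ, wordProd_cons, Equiv.Perm.mul_apply, ih (a + 1), sigmaT_apply]
    split_ifs <;> omega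

lemma wordProd_range'_inv_apply (a m x : ℕ) :
    (wordProd (List.range' a m))⁻¹ x =
      if a < x ∧ x ≤ a + m then x - 1 else if x = a then a + m else x := by
  set y := if a < x ∧ x ≤ a + m then x - 1 else if x = a then a + m else x with hy
  have : wordProd (List.range' a m) y = x := by
    rw [wordProd_range'_apply]
    rw [hy]
    split_ifs <;> omega
  rw [← this, Equiv.Perm.inv_apply_self]

lemma exists_nodup_reduced {n : ℕ} {w : Equiv.Perm ℕ} (hw : MemSymm n w)
    (h321 : ¬(∃ x1 x2 x3 : ℕ, 1 ≤ x1 ∧ x1 < x2 ∧ x2 < x3 ∧ x3 ≤ n ∧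
           w x3 < w x2 ∧ w x2 < w x1))
    (h3412 : ¬(∃ x1 x2 x3 x4 : ℕ, 1 ≤ x1 ∧ x1 < x2 ∧ x2 < x3 ∧ x3 < x4 ∧ x4 ≤ n ∧
           w x3 < w x4 ∧ w x4 < w x1 ∧ w x1 < w x2)) :
    ∃ s, IsReducedWord n w s ∧ s.Nodup := by
  suffices H : ∀ k (w : Equiv.Perm ℕ), MemSymm n w →
      (¬(∃ x1 x2 x3 : ℕ, 1 ≤ x1 ∧ x1 < x2 ∧ x2 < x3 ∧ x3 ≤ n ∧
           w x3 < w x2 ∧ w x2 < w x1)) →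
      (¬(∃ x1 x2 x3 x4 : ℕ, 1 ≤ x1 ∧ x1 < x2 ∧ x2 < x3 ∧ x3 < x4 ∧ x4 ≤ n ∧
           w x3 < w x4 ∧ w x4 < w x1 ∧ w x1 < w x2)) →
      invc n w = k → ∃ s, IsReducedWord n w s ∧ s.Nodup by
    exact H _ w hw h321 h3412 rfl
  clear hw h321 h3412 w
  intro k
  induction k using Nat.strong_induction_on with
  | _ k IH =>
    intro w hw h321 h3412 hk
    by_cases hone : w = 1
    · subst hone
      refine ⟨[], reduced_iff.mpr ⟨⟨by simp, rfl⟩, by rw [invc_one]; rfl⟩, List.nodup_nil⟩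
    · -- least moved point a
      have hmoved : ∃ x, w x ≠ x := by
        by_contra hcon
        push_neg at hcon
        exact hone (Equiv.ext fun x => by simpa using hcon x)
      set a := Nat.find hmoved with ha
      have haw : w a ≠ a := Nat.find_spec hmoved
      have hfixlt : ∀ x, x < a → w x = x := by
        intro x hx
        by_contra hcon
        have h2 : a ≤ x := ha ▸ Nat.find_le hcon
        omega
      have ha1 : 1 ≤ a := by
        rcases Nat.eq_zero_or_pos a with h | h
        · exact absurd (hw 0 (by simp)) (h ▸ haw)
        · exact h
      have hagt : a < w a := by
        rcases Nat.lt_or_ge a (w a) with h | h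
        · exact h
        · exfalso
          have hlt : w a < a := by omega
          have := hfixlt (w a) hlt
          exact haw (w.injective this)
      have han : a ≤ n := by
        by_contra hcon
        exact haw (hw a (by simp; omega))
      set p := w⁻¹ a with hpdef
      have hwp : w p = a := Equiv.Perm.apply_inv_self w a
      have hpa : a < p := by
        rcases Nat.lt_trichotomy p a with h | h | h
        · exfalso
          have h2 := hfixlt p h
          rw [hwp] at h2
          omega
        · exfalso
          rw [h] at hwp
          exact haw hwp
        · exact h
      have hpn : p ≤ n := by
        by_contra hcon
        have := hw p (by simp; omega)
        omega
      -- values in [a, p) are > a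
      have hvala : ∀ y, a ≤ y → y < p → a < w y := by
        intro y hy1 hy2
        have hne : w y ≠ a := fun he => by
          have : y = p := w.injective (he.trans hwp.symm)
          omega
        rcases Nat.lt_or_ge a (w y) with h | h
        · exact h
        · exfalso
          have hlt : w y < a := by omega
          have := hfixlt (w y) hlt
          have := w.injective this
          omega
      -- increasing on [a, p-1]
      have hmono : ∀ x y, a ≤ x → x < y → y ≤ p - 1 → w x < w y := by
        intro x y hx hxy hyp
        rcases Nat.lt_trichotomy (w x) (w y) with h | h | h
        · exact h
        · exact absurd (w.injective h) (by omega)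
        · exfalso
          exact h321 ⟨x, y, p, by omega, by omega, by omega, hpn, by
            rw [hwp]; exact hvala y (by omega) (by omega), h⟩
      set m := p - a with hm
      set L := List.range' a m with hL
      have hLb : ∀ j ∈ L, 1 ≤ j ∧ j ≤ n - 1 := by
        intro j hj
        rw [hL, List.mem_range'_1] at hj
        omega
      set d := wordProd L with hd
      set v := w * d⁻¹ with hv
      have hvx : ∀ x, v x = w (d⁻¹ x) := fun x => rfl
      have hdinv : ∀ x, d⁻¹ x = if a < x ∧ x ≤ p then x - 1 else if x = a then p else x := by
        intro x
        rw [hd, hL, wordProd_range'_inv_apply]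
        split_ifs <;> omega
      have hvfix : ∀ x, x < a → v x = x := by
        intro x hx
        rw [hvx, hdinv]
        split_ifs <;> first | exact hfixlt x hx | omega
      have hva : v a = a := by
        rw [hvx, hdinv]
        split_ifs <;> first | exact hwp | omega
      have hvmid : ∀ x, a < x → x ≤ p → v x = w (x - 1) := by
        intro x h1 h2
        rw [hvx, hdinv]
        split_ifs <;> first | rfl | omega
      have hvhigh : ∀ x, p < x → v x = w x := by
        intro x h1
        rw [hvx, hdinv]
        split_ifs <;> first | rfl | omega
      have hvmem : MemSymm n v := memSymm_mul hw (memSymm_inv (memSymm_wordProd hLb))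
      have hvlow : ∀ y, v y < a → y < a ∧ v y = y := by
        intro y hy
        have hfix : v (v y) = v y := hvfix (v y) hy
        have h3 : v y = y := v.injective hfix
        exact ⟨by omega, h3⟩
      have hvaeq : ∀ y, v y = a → y = a := by
        intro y hy
        exact v.injective (hy.trans hva.symm)
      -- pattern transfer
      set f : ℕ → ℕ := fun y => if a < y ∧ y ≤ p then y - 1 else y with hf
      have hvf : ∀ y, y ≠ a → v y = w (f y) := by
        intro y hy
        rw [hvx, hdinv]
        simp only [hf]
        split_ifs <;> first | rfl | omega
      have hfmono : ∀ y y', y < y' → y ≠ a → y' ≠ a → f y < f y' := by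
        intro y y' h1 h2 h3
        simp only [hf]
        split_ifs <;> omega
      have hv321 : ¬(∃ x1 x2 x3 : ℕ, 1 ≤ x1 ∧ x1 < x2 ∧ x2 < x3 ∧ x3 ≤ n ∧
           v x3 < v x2 ∧ v x2 < v x1) := by
        rintro ⟨y1, y2, y3, b1, o12, o23, b3, d1, d2⟩
        by_cases hy1 : y1 = a
        · rw [hy1, hva] at d2
          have := hvlow y2 d2
          omega
        by_cases hy2 : y2 = a
        · rw [hy2, hva] at d1
          have := hvlow y3 d1
          omega
        by_cases hy3 : y3 = a
        · rw [hy3, hva] at d1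
          rw [hy3] at o23
          have h6 := hvfix y2 o23
          omega
        refine h321 ⟨f y1, f y2, f y3, ?_, hfmono _ _ o12 hy1 hy2, hfmono _ _ o23 hy2 hy3, ?_, ?_, ?_⟩
        · simp only [hf]; split_ifs <;> omega
        · simp only [hf]; split_ifs <;> omega
        · rw [← hvf _ hy2, ← hvf _ hy3]; exact d1
        · rw [← hvf _ hy1, ← hvf _ hy2]; exact d2
      have hv3412 : ¬(∃ x1 x2 x3 x4 : ℕ, 1 ≤ x1 ∧ x1 < x2 ∧ x2 < x3 ∧ x3 < x4 ∧ x4 ≤ n ∧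
           v x3 < v x4 ∧ v x4 < v x1 ∧ v x1 < v x2) := by
        rintro ⟨y1, y2, y3, y4, b1, o12, o23, o34, b4, q1, q2, q3⟩
        by_cases hy1 : y1 = a
        · rw [hy1, hva] at q2
          have := hvlow y4 q2
          omega
        by_cases hy2 : y2 = a
        · rw [hy2, hva] at q3
          have hl1 := hvlow y1 q3
          have := hvlow y4 (by omega)
          omega
        by_cases hy3 : y3 = a
        · rw [hy3] at o23 o34
          have h6 := hvfix y1 (by omega)
          have h7 := hvlow y4 (by omega)
          omega
        by_cases hy4 : y4 = a
        · rw [hy4, hva] at q2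
          rw [hy4] at o34
          have h6 := hvfix y1 (by omega)
          omega
        refine h3412 ⟨f y1, f y2, f y3, f y4, ?_, hfmono _ _ o12 hy1 hy2,
          hfmono _ _ o23 hy2 hy3, hfmono _ _ o34 hy3 hy4, ?_, ?_, ?_, ?_⟩
        · simp only [hf]; split_ifs <;> omega
        · simp only [hf]; split_ifs <;> omega
        · rw [← hvf _ hy3, ← hvf _ hy4]; exact q1
        · rw [← hvf _ hy4, ← hvf _ hy1]; exact q2
        · rw [← hvf _ hy1, ← hvf _ hy2]; exact q3
      -- key claim: v preserves the initial segments [0,i] for i in [a, p-1]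
      have hkey : ∀ i, a ≤ i → i ≤ p - 1 → ∀ x, x ≤ i → v x ≤ i := by
        intro i hi1 hi2 x hx
        rcases Nat.lt_trichotomy x a with h | rfl | h
        · rw [hvfix x h]; omega
        · rw [hva]; omega
        · rw [hvmid x h (by omega)]
          set x' := x - 1 with hx'
          have hx'1 : a ≤ x' := by omega
          have hx'2 : x' ≤ i - 1 := by omega
          by_contra hcon
          push_neg at hcon
          by_cases hz : ∃ u, a < u ∧ u ≤ i ∧ p < w⁻¹ u
          · obtain ⟨u, hu1, hu2, hzu⟩ := hz
            set z := w⁻¹ u with hzdef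
            have hwz : w z = u := Equiv.Perm.apply_inv_self w u
            have hzn : z ≤ n := (memSymm_le (memSymm_inv hw) (by omega) (by omega)).2
            exact h3412 ⟨x', p - 1, p, z, by omega, by omega, by omega, by omega, hzn,
              by rw [hwp, hwz]; omega,
              by rw [hwz]; omega,
              hmono x' (p - 1) hx'1 (by omega) le_rfl⟩
          · push_neg at hz
            have hmaps : ∀ u ∈ Finset.Ioc a i, w⁻¹ u ∈ Finset.Ico a x' := by
              intro u hu
              rw [Finset.mem_Ioc] at hu
              rw [Finset.mem_Ico]
              set q := w⁻¹ u with hqdef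
              have hwq : w q = u := Equiv.Perm.apply_inv_self w u
              have hqp : q ≤ p := hz u hu.1 hu.2
              have hqnep : q ≠ p := fun he => by rw [he, hwp] at hwq; omega
              have hqa : a ≤ q := by
                by_contra hcon2
                push_neg at hcon2
                have := hfixlt q hcon2
                rw [this] at hwq
                omega
              refine ⟨hqa, ?_⟩
              rcases Nat.lt_trichotomy q x' with h | heq | h
              · exact h
              · exfalso
                rw [heq] at hwq
                omega
              · exfalso
                have := hmono x' q hx'1 h (by omega)
                omega
            have hcard := Finset.card_le_card_of_injOn _ hmaps
              (Set.InjOn.mono (Set.subset_univ _) (w⁻¹.injective.injOn))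
            rw [Nat.card_Ioc, Nat.card_Ico] at hcard
            omega
      -- induction step: invc n w = invc n v + m
      have hstep : ∀ j, j ≤ m → invc n (v * wordProd (List.range' a j)) = invc n v + j := by
        intro j
        induction j with
        | zero => simp [show wordProd [] = (1 : Equiv.Perm ℕ) from rfl]
        | succ j ihj =>
          intro hj
          rw [List.range'_1_concat, wordProd_append, wordProd_singleton, ← mul_assoc]
          set vj := v * wordProd (List.range' a j) with hvj
          have hvjm : MemSymm n vj :=
            memSymm_mul hvmem (memSymm_wordProd (fun x hx => by
              rw [List.mem_range'_1] at hx; omega))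
          have hvja : vj (a + j) = a := by
            rw [hvj, Equiv.Perm.mul_apply, wordProd_range'_apply]
            split_ifs <;> [omega; exact hva; omega]
          have hvjb : vj (a + j + 1) = w (a + j) := by
            rw [hvj, Equiv.Perm.mul_apply, wordProd_range'_apply]
            split_ifs with h1 h2
            · omega
            · omega
            · exact hvmid (a + j + 1) (by omega) (by omega)
          have hasc : vj (a + j) < vj (a + j + 1) := by
            rw [hvja, hvjb]
            exact hvala (a + j) (by omega) (by omega)
          rw [invc_mul_sigma_asc hvjm (by omega) (by omega) hasc, ihj (by omega)]
          omega
      have hvd : v * d = w := by rw [hv, mul_assoc]; simp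
      have hinvw : invc n w = invc n v + m := by
        have := hstep m le_rfl
        rw [← hL, ← hd, hvd] at this
        exact this
      have hmpos : 1 ≤ m := by omega
      obtain ⟨sv, hsvred, hsvnd⟩ := IH (invc n v) (by omega) v hvmem hv321 hv3412 rfl
      have hsvb := hsvred.1.1
      have hsvlen : sv.length = invc n v := (reduced_iff.mp hsvred).2
      refine ⟨sv ++ L, reduced_iff.mpr ⟨⟨?_, ?_⟩, ?_⟩, ?_⟩
      · intro j hj
        rcases List.mem_append.mp hj with h | h
        · exact hsvb j h
        · exact hLb j h
      · rw [wordProd_append, hsvred.1.2, ← hd, hvd]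
      · rw [List.length_append, hsvlen, hinvw, hL, List.length_range']
      · refine List.Nodup.append hsvnd (by rw [hL]; exact List.nodup_range') ?_
        intro j hjs hjL
        have hDj : Dp v j := by
          have := letters_reduced (hsvred.1.2 ▸ hsvred)
          rw [hsvred.1.2] at this
          exact (this j).mp hjs
        rw [hL, List.mem_range'_1] at hjL
        exact hDj (hkey j (by omega) (by omega))
end S6

section S7

lemma sigmaT_inv (i : ℕ) : (sigmaT i)⁻¹ = sigmaT i := by
  simp [sigmaT]

lemma sigma_comm {i j : ℕ} (h : i + 2 ≤ j ∨ j + 2 ≤ i) :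
    sigmaT i * sigmaT j = sigmaT j * sigmaT i := by
  apply Equiv.ext
  intro x
  simp only [Equiv.Perm.mul_apply, sigmaT_apply]
  split_ifs <;> omega

lemma invc_sigma_mul_desc {n j : ℕ} {w : Equiv.Perm ℕ} (hw : MemSymm n w)
    (h1 : 1 ≤ j) (h2 : j + 1 ≤ n) (hd : w⁻¹ (j + 1) < w⁻¹ j) :
    invc n w = invc n (sigmaT j * w) + 1 := by
  have hsw : MemSymm n (sigmaT j * w) := memSymm_mul (memSymm_sigmaT h1 h2) hw
  have e1 : invc n (sigmaT j * w) = invc n ((sigmaT j * w)⁻¹) := (invc_inv hsw).symm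
  have e2 : (sigmaT j * w)⁻¹ = w⁻¹ * sigmaT j := by
    rw [mul_inv_rev, sigmaT_inv]
  have e3 := invc_mul_sigma_desc (memSymm_inv hw) h1 h2 hd
  rw [e1, e2, ← e3, invc_inv hw]

/-- a left descent can start a nodup reduced word -/
lemma exists_nodup_starting {n j : ℕ} {w : Equiv.Perm ℕ} (hw : MemSymm n w)
    (hex : ∃ s, IsReducedWord n w s ∧ s.Nodup) (hj1 : 1 ≤ j) (hj2 : j ≤ n - 1)
    (hdesc : w⁻¹ (j + 1) < w⁻¹ j) :
    ∃ r, IsReducedWord n w (j :: r) ∧ (j :: r).Nodup := by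
  have hj2' : j + 1 ≤ n := by omega
  have hd := invc_sigma_mul_desc hw hj1 hj2' hdesc
  obtain ⟨r, hb, hp, hl⟩ := exists_word_length_invc (memSymm_mul (memSymm_sigmaT hj1 hj2') hw)
  have hred : IsReducedWord n w (j :: r) := by
    rw [reduced_iff]
    refine ⟨⟨?_, ?_⟩, ?_⟩
    · intro x hx
      rcases List.mem_cons.mp hx with h | h
      · subst h; exact ⟨hj1, hj2⟩
      · exact hb x h
    · rw [wordProd_cons, hp, ← mul_assoc, sigmaT_sq, one_mul]
    · simp only [List.length_cons, hl]
      omega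
  exact ⟨r, hred, nodup_of_exists_nodup hex hred⟩

lemma desc_of_cons {x : ℕ} {l : List ℕ} (hx : x ∉ l) :
    (wordProd (x :: l))⁻¹ (x + 1) < (wordProd (x :: l))⁻¹ x := by
  have hpres := pres_wordProd (fun j hj he => hx (by rwa [he] at hj))
  have hpinv := pres_inv hpres
  have hinv : (wordProd (x :: l))⁻¹ = (wordProd l)⁻¹ * sigmaT x := by
    rw [wordProd_cons, mul_inv_rev, sigmaT_inv]
  have e1 : sigmaT x (x + 1) = x := by rw [sigmaT_apply]; split_ifs <;> omega
  have e2 : sigmaT x x = x + 1 := by rw [sigmaT_apply]; split_ifs <;> omega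
  rw [hinv, Equiv.Perm.mul_apply, Equiv.Perm.mul_apply, e1, e2]
  have h3 : (wordProd l)⁻¹ x ≤ x := (hpinv x).mpr le_rfl
  have h4 : ¬((wordProd l)⁻¹ (x + 1) ≤ x) := fun hc => by
    have := (hpinv (x + 1)).mp hc
    omega
  omega

lemma filter_cons_prod (A : ℕ → Bool) (x : ℕ) (l : List ℕ) :
    wordProd ((x :: l).filter A) = (if A x then sigmaT x else 1) * wordProd (l.filter A) := by
  by_cases h : A x <;> simp [List.filter_cons, h, wordProd_cons]

/-- products of filtered subwords of nodup words depend only on the product -/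
lemma filter_prod_eq {n : ℕ} : ∀ k (t t' : List ℕ), t.length ≤ k →
    (∀ j ∈ t, 1 ≤ j ∧ j ≤ n - 1) → (∀ j ∈ t', 1 ≤ j ∧ j ≤ n - 1) →
    t.Nodup → t'.Nodup → wordProd t = wordProd t' →
    ∀ A : ℕ → Bool, wordProd (t.filter A) = wordProd (t'.filter A) := by
  intro k
  induction k with
  | zero =>
    intro t t' hlen hb hb' hnd hnd' hprod A
    have ht : t = [] := List.length_eq_zero_iff.mp (by omega)
    subst ht
    have h1 : wordProd t' = 1 := hprod.symm
    have hred := nodup_isReduced hb' hnd'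
    have hl' : t'.length = 0 := by
      have := (reduced_iff.mp hred).2
      rw [h1, invc_one] at this
      exact this
    have ht' : t' = [] := List.length_eq_zero_iff.mp hl'
    subst ht'
    rfl
  | succ k IHk =>
    intro t t' hlen hb hb' hnd hnd' hprod A
    -- lengths are equal
    have hlef : t.length = t'.length := by
      have h1 := (reduced_iff.mp (nodup_isReduced hb hnd)).2
      have h2 := (reduced_iff.mp (nodup_isReduced hb' hnd')).2
      rw [hprod] at h1
      omega
    match t, t' with
    | [], t' =>
      have h1 : wordProd t' = 1 := hprod.symm
      have hl' : t'.length = 0 := by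
        have := (reduced_iff.mp (nodup_isReduced hb' hnd')).2
        rw [h1, invc_one] at this
        exact this
      have ht' : t' = [] := List.length_eq_zero_iff.mp hl'
      subst ht'
      rfl
    | (i :: t1), [] => simp at hlef
    | (i :: t1), (j :: t1') =>
      have hnd1 := (List.nodup_cons.mp hnd).2
      have hnd1' := (List.nodup_cons.mp hnd').2
      have hit1 : i ∉ t1 := (List.nodup_cons.mp hnd).1
      have hjt1' : j ∉ t1' := (List.nodup_cons.mp hnd').1
      have hb1 : ∀ x ∈ t1, 1 ≤ x ∧ x ≤ n - 1 := fun x hx => hb x (by simp [hx])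
      have hb1' : ∀ x ∈ t1', 1 ≤ x ∧ x ≤ n - 1 := fun x hx => hb' x (by simp [hx])
      have hi := hb i (by simp)
      have hj := hb' j (by simp)
      rcases eq_or_ne i j with rfl | hij
      · -- same first letter
        have hcancel : wordProd t1 = wordProd t1' := by
          have := hprod
          rw [wordProd_cons, wordProd_cons] at this
          exact mul_left_cancel this
        have H := IHk t1 t1' (by simpa using Nat.lt_succ_iff.mp (by
          simpa using Nat.lt_of_lt_of_le (by simp) hlen)) hb1 hb1' hnd1 hnd1' hcancel
        rw [filter_cons_prod, filter_cons_prod, H A]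
      · -- different first letters
        set w := wordProd (i :: t1) with hwdef
        have hwmem : MemSymm n w := memSymm_wordProd hb
        have hdesci : w⁻¹ (i + 1) < w⁻¹ i := desc_of_cons hit1
        have hdescj : w⁻¹ (j + 1) < w⁻¹ j := by
          rw [hprod]
          exact desc_of_cons hjt1'
        -- exclude adjacent letters using 321-avoidance
        have hnadj : i + 2 ≤ j ∨ j + 2 ≤ i := by
          rcases Nat.lt_or_ge i j with hlt | hge
          · -- i < j; rule out j = i + 1
            by_contra hcon
            push_neg at hcon
            have hji : j = i + 1 := by omega
            subst hji
            have h321 := (noPattern_of_nodup hnd).1 (w⁻¹ (i + 2)) (w⁻¹ (i + 1)) (w⁻¹ i)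
              hdescj hdesci
            rw [← hwdef] at h321
            apply h321
            rw [Equiv.Perm.apply_inv_self, Equiv.Perm.apply_inv_self,
              Equiv.Perm.apply_inv_self]
            omega
          · by_contra hcon
            push_neg at hcon
            have hji : i = j + 1 := by omega
            subst hji
            have h321 := (noPattern_of_nodup hnd).1 (w⁻¹ (j + 2)) (w⁻¹ (j + 1)) (w⁻¹ j)
              hdesci hdescj
            rw [← hwdef] at h321
            apply h321
            rw [Equiv.Perm.apply_inv_self, Equiv.Perm.apply_inv_self,
              Equiv.Perm.apply_inv_self]
            omega
        -- w1 = product of the tail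
        set w1 := wordProd t1 with hw1def
        have hw1mem : MemSymm n w1 := memSymm_wordProd hb1
        have hww1 : w = sigmaT i * w1 := by rw [hwdef, wordProd_cons]
        have hw1w : w1 = sigmaT i * w := by
          rw [hww1, ← mul_assoc, sigmaT_sq, one_mul]
        have hdescj1 : w1⁻¹ (j + 1) < w1⁻¹ j := by
          have e : w1⁻¹ = w⁻¹ * sigmaT i := by
            rw [hw1w, mul_inv_rev, sigmaT_inv]
          have e1 : sigmaT i j = j := by rw [sigmaT_apply]; split_ifs <;> omega
          have e2 : sigmaT i (j + 1) = j + 1 := by rw [sigmaT_apply]; split_ifs <;> omega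
          rw [e, Equiv.Perm.mul_apply, Equiv.Perm.mul_apply, e1, e2]
          exact hdescj
        have hw1ex : ∃ s, IsReducedWord n w1 s ∧ s.Nodup :=
          ⟨t1, hw1def ▸ nodup_isReduced hb1 hnd1, hnd1⟩
        obtain ⟨r, hjr_red, hjr_nd⟩ :=
          exists_nodup_starting hw1mem hw1ex hj.1 hj.2 hdescj1
        have hjr_b := hjr_red.1.1
        have hjr_p : wordProd (j :: r) = w1 := hjr_red.1.2
        have hrp : wordProd r = sigmaT j * w1 := by
          rw [← hjr_p, wordProd_cons, ← mul_assoc, sigmaT_sq, one_mul]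
        have hrb : ∀ x ∈ r, 1 ≤ x ∧ x ≤ n - 1 := fun x hx => hjr_b x (by simp [hx])
        have hrnd : r.Nodup := (List.nodup_cons.mp hjr_nd).2
        have hjr : j ∉ r := (List.nodup_cons.mp hjr_nd).1
        -- i is not in r
        have hir : i ∉ r := by
          intro hcon
          have hred' : IsReducedWord n (wordProd (j :: r)) (j :: r) := by
            rw [hjr_p]; exact hjr_red
          have hDp : Dp (wordProd (j :: r)) i := (letters_reduced hred' i).mp (by simp [hcon])
          rw [hjr_p] at hDp
          exact hit1 ((letters_reduced (nodup_isReduced hb1 hnd1) i).mpr hDp)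
        -- lengths for recursion
        have hlt1 : t1.length ≤ k := by
          simp only [List.length_cons] at hlen
          omega
        have hlenjr : (j :: r).length = t1.length := by
          have h1 := (reduced_iff.mp hjr_red).2
          have h2 := (reduced_iff.mp (nodup_isReduced hb1 hnd1)).2
          rw [← hw1def] at h2
          omega
        have H1 := IHk t1 (j :: r) hlt1 hb1 hjr_b hnd1 hjr_nd (by rw [hjr_p])
        have hPir : wordProd (i :: r) = wordProd t1' := by
          rw [wordProd_cons, hrp]
          have hPt1' : wordProd t1' = sigmaT j * w := by
            have h5 : wordProd (j :: t1') = w := hprod.symm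
            rw [← h5, wordProd_cons, ← mul_assoc, sigmaT_sq, one_mul]
          rw [hPt1', hww1, ← mul_assoc, ← mul_assoc, sigma_comm hnadj]
        have hirb : ∀ x ∈ (i :: r), 1 ≤ x ∧ x ≤ n - 1 := by
          intro x hx
          rcases List.mem_cons.mp hx with h | h
          · subst h; exact hi
          · exact hrb x h
        have hirnd : (i :: r).Nodup := List.nodup_cons.mpr ⟨hir, hrnd⟩
        have hlir : (i :: r).length ≤ k := by
          simp only [List.length_cons] at hlenjr ⊢
          simp only [List.length_cons] at hlen
          omega
        have H2 := IHk (i :: r) t1' hlir hirb hb1' hirnd hnd1' hPir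
        -- assemble
        have e1 := filter_cons_prod A i t1
        have e2 := H1 A
        have e3 := filter_cons_prod A j r
        have e4 := filter_cons_prod A j t1'
        have e5 := (H2 A).symm
        have e6 := filter_cons_prod A i r
        rw [e1, e2, e3, e4, e5, e6, ← mul_assoc, ← mul_assoc]
        congr 1
        by_cases hAi : A i <;> by_cases hAj : A j <;> simp [hAi, hAj]
        exact sigma_comm hnadj

end S7

section S8

lemma nodup_of_card_eq {l : List ℕ} (h : l.toFinset.card = l.length) : l.Nodup := by
  rw [List.card_toFinset] at h
  have hsub : l.dedup.Sublist l := List.dedup_sublist l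
  have : l.dedup = l := hsub.eq_of_length h
  rw [← this]
  exact List.nodup_dedup l

lemma sigmaT_injective {i j : ℕ} (h : sigmaT i = sigmaT j) : i = j := by
  by_contra hne
  have h1 : sigmaT i i = i + 1 := by rw [sigmaT_apply]; simp
  have h2 : sigmaT j i = if i = j then j + 1 else if i = j + 1 then j else i := sigmaT_apply j i
  rw [h] at h1
  rw [h1] at h2
  split_ifs at h2 <;> omega

lemma reduced_nil {n : ℕ} : IsReducedWord n 1 [] :=
  ⟨⟨by simp, rfl⟩, fun t _ => by simp⟩

lemma reduced_singleton {n i : ℕ} (h1 : 1 ≤ i) (h2 : i ≤ n - 1) :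
    IsReducedWord n (sigmaT i) [i] := by
  constructor
  · exact ⟨by simpa using ⟨h1, h2⟩, by simp [wordProd]⟩
  · intro t ht
    rcases t with _ | ⟨a, t'⟩
    · exfalso
      have h1 : (1 : Equiv.Perm ℕ) = sigmaT i := ht.2
      exact sigmaT_ne_one i h1.symm
    · simp

lemma sublist_eq_filter {u t : List ℕ} (hu : u.Sublist t) (ht : t.Nodup) :
    u = t.filter (fun x => decide (x ∈ u)) := by
  induction hu with
  | slnil => simp
  | @cons l₁ l₂ a h ih =>
    rw [List.nodup_cons] at ht
    have hal : a ∉ l₁ := fun hc => ht.1 (h.subset hc)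
    rw [List.filter_cons, if_neg (by simpa using hal)]
    exact ih ht.2
  | @cons_cons l₁ l₂ a h ih =>
    rw [List.nodup_cons] at ht
    rw [List.filter_cons, if_pos (by simp)]
    have hcg : l₂.filter (fun x => decide (x ∈ a :: l₁)) = l₂.filter (fun x => decide (x ∈ l₁)) := by
      apply List.filter_congr
      intro x hx
      have hxa : x ≠ a := fun hc => ht.1 (hc ▸ hx)
      simp [hxa]
    rw [hcg, ← ih ht.2]

/-- the canonical representation: every v ⪯ w equals the filtered subword of s -/
lemma canonical_rep {n : ℕ} {w : Equiv.Perm ℕ} {s : List ℕ}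
    (hsred : IsReducedWord n w s) (hsnd : s.Nodup)
    (hall : ∀ t : List ℕ, IsReducedWord n w t → t.Nodup)
    {v : Equiv.Perm ℕ} (hv : BruhatLE n v w) (A : ℕ → Bool)
    (hA : ∀ x, A x = true ↔ Dp v x) :
    wordProd (s.filter A) = v := by
  classical
  obtain ⟨u, t, hured, htred, husub⟩ := hv
  have htnd : t.Nodup := hall t htred
  have hund : u.Nodup := husub.nodup htnd
  have hueq : u = t.filter (fun x => decide (x ∈ u)) := sublist_eq_filter husub htnd
  have hulet : ∀ x, x ∈ u ↔ Dp v x := by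
    intro x
    have := letters_reduced (hured.1.2 ▸ hured) x
    rwa [hured.1.2] at this
  have hfeq : t.filter (fun x => decide (x ∈ u)) = t.filter A := by
    apply List.filter_congr
    intro x _
    have h1 : (decide (x ∈ u) = true) ↔ (A x = true) := by
      rw [decide_eq_true_eq, hA]
      exact hulet x
    exact Bool.eq_iff_iff.mpr h1
  have hfpe := filter_prod_eq t.length t s le_rfl htred.1.1 hsred.1.1 htnd hsnd
    (htred.1.2.trans hsred.1.2.symm) A
  rw [← hfpe, ← hfeq, ← hueq, hured.1.2]

end S8
end AUX

/-- boolean characterization: the four conditions are equivalent. -/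
theorem boolean_characterization (n : ℕ) (w : Equiv.Perm ℕ) (hw : MemSymm n w) :
    ((∃ (S : Type) (_ : Fintype S),
        RelIsomorphic (IdealLE n w) (fun A B : Set S => A ⊆ B)) ↔
      (∀ s : List ℕ, IsReducedWord n w s → s.Nodup)) ∧
    ((∀ s : List ℕ, IsReducedWord n w s → s.Nodup) ↔
      (∃ s : List ℕ, IsReducedWord n w s ∧ s.Nodup)) ∧
    ((∃ s : List ℕ, IsReducedWord n w s ∧ s.Nodup) ↔
      (¬(∃ x1 x2 x3 : ℕ, 1 ≤ x1 ∧ x1 < x2 ∧ x2 < x3 ∧ x3 ≤ n ∧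
           w x3 < w x2 ∧ w x2 < w x1) ∧
       ¬(∃ x1 x2 x3 x4 : ℕ, 1 ≤ x1 ∧ x1 < x2 ∧ x2 < x3 ∧ x3 < x4 ∧ x4 ≤ n ∧
           w x3 < w x4 ∧ w x4 < w x1 ∧ w x1 < w x2))) := by
  classical
  -- existence of a reduced word
  have hex_red : ∃ s, IsReducedWord n w s := by
    obtain ⟨s, hb, hp, hl⟩ := exists_word_length_invc hw
    exact ⟨s, reduced_iff.mpr ⟨⟨hb, hp⟩, hl⟩⟩
  -- Part 2 : (∀ nodup) ↔ (∃ nodup)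
  have part2 : (∀ s : List ℕ, IsReducedWord n w s → s.Nodup) ↔
      (∃ s : List ℕ, IsReducedWord n w s ∧ s.Nodup) := by
    constructor
    · intro hall
      obtain ⟨s, hs⟩ := hex_red
      exact ⟨s, hs, hall s hs⟩
    · intro hex t ht
      exact nodup_of_exists_nodup hex ht
  -- Part 3 : (∃ nodup) ↔ pattern avoidance
  have part3 : (∃ s : List ℕ, IsReducedWord n w s ∧ s.Nodup) ↔
      (¬(∃ x1 x2 x3 : ℕ, 1 ≤ x1 ∧ x1 < x2 ∧ x2 < x3 ∧ x3 ≤ n ∧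
           w x3 < w x2 ∧ w x2 < w x1) ∧
       ¬(∃ x1 x2 x3 x4 : ℕ, 1 ≤ x1 ∧ x1 < x2 ∧ x2 < x3 ∧ x3 < x4 ∧ x4 ≤ n ∧
           w x3 < w x4 ∧ w x4 < w x1 ∧ w x1 < w x2)) := by
    constructor
    · rintro ⟨s, hsred, hsnd⟩
      have hnp := noPattern_of_nodup hsnd
      rw [hsred.1.2] at hnp
      constructor
      · rintro ⟨x1, x2, x3, _, o12, o23, _, d1, d2⟩
        exact hnp.1 x1 x2 x3 o12 o23 ⟨d1, d2⟩
      · rintro ⟨x1, x2, x3, x4, _, o12, o23, o34, _, q1, q2, q3⟩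
        exact hnp.2 x1 x2 x3 x4 o12 o23 o34 ⟨q1, q2, q3⟩
    · rintro ⟨h321, h3412⟩
      exact exists_nodup_reduced hw h321 h3412
  -- Part 1
  have part1 : (∃ (S : Type) (_ : Fintype S),
        RelIsomorphic (IdealLE n w) (fun A B : Set S => A ⊆ B)) ↔
      (∀ s : List ℕ, IsReducedWord n w s → s.Nodup) := by
    constructor
    · -- boolean ideal ⇒ all reduced words nodup
      rintro ⟨S, fS, e, he⟩ t htred
      -- the chain of prefixes
      set P : ℕ → IdealB n w := fun k =>
        ⟨wordProd (t.take k), ⟨t.take k, t, take_reduced htred k, htred, List.take_sublist k t⟩⟩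
        with hP
      have hPmono : ∀ j k : ℕ, j ≤ k → IdealLE n w (P j) (P k) := by
        intro j k hjk
        refine ⟨t.take j, t.take k, take_reduced htred j, take_reduced htred k, ?_⟩
        have : t.take j = (t.take k).take j := by
          rw [List.take_take, Nat.min_eq_left hjk]
        rw [this]
        exact List.take_sublist j (t.take k)
      have hPlen : ∀ k, k ≤ t.length → (t.take k).length = k := by
        intro k hk
        simp [List.length_take, Nat.min_eq_left hk]
      have hPne : ∀ k, k < t.length → P k ≠ P (k + 1) := by
        intro k hk hcon
        have h1 : (t.take k).length = invc n (wordProd (t.take k)) :=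
          (reduced_iff.mp (take_reduced htred k)).2
        have h2 : (t.take (k + 1)).length = invc n (wordProd (t.take (k + 1))) :=
          (reduced_iff.mp (take_reduced htred (k + 1))).2
        have hval : wordProd (t.take k) = wordProd (t.take (k + 1)) :=
          congrArg Subtype.val hcon
        rw [hval] at h1
        rw [hPlen k (by omega)] at h1
        rw [hPlen (k + 1) (by omega)] at h2
        omega
      have hstrict : ∀ k : Fin t.length, ∃ y : S, y ∈ e (P (k + 1)) ∧ y ∉ e (P k) := by
        intro k
        have hsub : e (P k) ⊆ e (P (k + 1)) := (he _ _).mp (hPmono k (k + 1) (by omega))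
        by_contra hcon
        push_neg at hcon
        have hsub2 : e (P (k + 1)) ⊆ e (P k) := fun y hy => by
          by_contra hyc
          exact hyc (hcon y hy)
        have : e (P (k + 1)) = e (P k) := Set.Subset.antisymm hsub2 hsub
        exact hPne k k.2 (e.injective this.symm)
      choose Y hY1 hY2 using hstrict
      have hYinj : Function.Injective Y := by
        intro k k' hkk
        by_contra hne
        rcases Nat.lt_or_ge k.1 k'.1 with hlt | hge
        · have hsub : e (P (k.1 + 1)) ⊆ e (P k'.1) := (he _ _).mp (hPmono _ _ (by omega))
          exact hY2 k' (by rw [← hkk]; exact hsub (hY1 k))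
        · have hlt2 : k'.1 < k.1 := by
            rcases Nat.lt_or_ge k'.1 k.1 with h | h
            · exact h
            · exact absurd (Fin.ext (by omega)) hne
          have hsub : e (P (k'.1 + 1)) ⊆ e (P k.1) := (he _ _).mp (hPmono _ _ (by omega))
          exact hY2 k (by rw [hkk]; exact hsub (hY1 k'))
      have hcard1 : t.length ≤ Fintype.card S := by
        have := Fintype.card_le_of_injective Y hYinj
        simpa using this
      -- atoms: each singleton comes from a simple reflection
      have hbot : BruhatLE n 1 w := ⟨[], t, reduced_nil, htred, List.nil_sublist t⟩
      set bot : IdealB n w := ⟨1, hbot⟩ with hbotdef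
      have hebot : e bot = ∅ := by
        have hsub : e bot ⊆ e (e.symm ∅) := by
          apply (he _ _).mp
          obtain ⟨sv, tv, hsv, htv, _⟩ := (e.symm (∅ : Set S)).2
          exact ⟨[], sv, reduced_nil, hsv, List.nil_sublist sv⟩
        rw [Equiv.apply_symm_apply] at hsub
        exact Set.subset_eq_empty hsub rfl
      have hatom : ∀ x : S, ∃ i : ℕ, (e.symm {x}).1 = sigmaT i ∧ i ∈ t := by
        intro x
        obtain ⟨ux, tx, hux, htx, hsubx⟩ := (e.symm ({x} : Set S)).2
        have hune : ux ≠ [] := by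
          intro hc
          have h1 : (e.symm ({x} : Set S)).1 = 1 := by
            rw [← hux.1.2, hc]; rfl
          have h2 : e.symm ({x} : Set S) = bot := Subtype.ext h1
          have := congrArg e h2
          rw [Equiv.apply_symm_apply, hebot] at this
          exact Set.singleton_ne_empty x this
        set i := ux.head hune with hi
        have himem : i ∈ ux := List.head_mem hune
        have hib := hux.1.1 i himem
        have hitx : i ∈ tx := hsubx.subset himem
        have hit : i ∈ t := by
          have hl1 := letters_reduced (htx.1.2 ▸ htx) i
          rw [htx.1.2] at hl1
          have hl2 := letters_reduced (htred.1.2 ▸ htred) i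
          rw [htred.1.2] at hl2
          exact hl2.mpr (hl1.mp hitx)
        have hsired : IsReducedWord n (sigmaT i) [i] := reduced_singleton hib.1 hib.2
        have haX : BruhatLE n (sigmaT i) w :=
          ⟨[i], t, hsired, htred, List.singleton_sublist.mpr hit⟩
        set aX : IdealB n w := ⟨sigmaT i, haX⟩ with haXdef
        have hle : IdealLE n w aX (e.symm {x}) :=
          ⟨[i], ux, hsired, hux, List.singleton_sublist.mpr himem⟩
        have hsub : e aX ⊆ {x} := by
          have := (he _ _).mp hle
          rwa [Equiv.apply_symm_apply] at this
        rcases Set.subset_singleton_iff_eq.mp hsub with h0 | h1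
        · exfalso
          have : aX = bot := e.injective (by rw [h0, hebot])
          exact sigmaT_ne_one i (congrArg Subtype.val this)
        · have : aX = e.symm {x} := e.injective (by rw [h1, Equiv.apply_symm_apply])
          exact ⟨i, by rw [← this], hit⟩
      choose φ hφ1 hφ2 using hatom
      have hφinj : Function.Injective φ := by
        intro x x' hxx
        have h1 : (e.symm {x}).1 = (e.symm {x'}).1 := by
          rw [hφ1 x, hφ1 x', hxx]
        have h2 : e.symm ({x} : Set S) = e.symm {x'} := Subtype.ext h1
        have h3 : ({x} : Set S) = {x'} := e.symm.injective h2
        exact Set.singleton_eq_singleton_iff.mp h3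
      have hcard2 : Fintype.card S ≤ t.toFinset.card := by
        have hψ : Function.Injective (fun x : S => (⟨φ x, by
          rw [List.mem_toFinset]; exact hφ2 x⟩ : {z // z ∈ t.toFinset})) := by
          intro x x' h
          exact hφinj (congrArg Subtype.val h)
        have := Fintype.card_le_of_injective _ hψ
        rwa [Fintype.card_coe] at this
      have hcard3 : t.toFinset.card ≤ t.length := List.toFinset_card_le t
      exact nodup_of_card_eq (by omega)
    · -- all reduced words nodup ⇒ boolean ideal
      intro hall
      obtain ⟨s, hsred⟩ := hex_red
      have hsnd : s.Nodup := hall s hsred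
      refine ⟨{x : ℕ // x ∈ s.toFinset}, inferInstance, ?_⟩
      set S := {x : ℕ // x ∈ s.toFinset} with hS
      -- the maps
      set eF : IdealB n w → Set S := fun V => {i : S | Dp V.1 i.1} with heF
      set gF : Set S → IdealB n w := fun A =>
        ⟨wordProd (s.filter (fun x => decide (∃ h : x ∈ s.toFinset, (⟨x, h⟩ : S) ∈ A))),
          by
            refine ⟨s.filter (fun x => decide (∃ h : x ∈ s.toFinset, (⟨x, h⟩ : S) ∈ A)), s,
              ?_, hsred, List.filter_sublist (l := s)⟩
            exact nodup_isReduced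
              (fun j hj => hsred.1.1 j (List.mem_of_mem_filter hj))
              ((List.filter_sublist (l := s)).nodup hsnd)⟩ with hgF
      have hDfilter : ∀ (A : ℕ → Bool),
          IsReducedWord n (wordProd (s.filter A)) (s.filter A) := by
        intro A
        exact nodup_isReduced (fun j hj => hsred.1.1 j (List.mem_of_mem_filter hj))
          ((List.filter_sublist (l := s)).nodup hsnd)
      have hleft : ∀ V : IdealB n w, gF (eF V) = V := by
        intro V
        apply Subtype.ext
        show wordProd _ = V.1
        have hcong : s.filter (fun x => decide (∃ h : x ∈ s.toFinset, (⟨x, h⟩ : S) ∈ eF V))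
            = s.filter (fun x => decide (Dp V.1 x)) := by
          apply List.filter_congr
          intro x hx
          have hxf : x ∈ s.toFinset := List.mem_toFinset.mpr hx
          simp only [decide_eq_decide]
          constructor
          · rintro ⟨h, hmem⟩
            exact hmem
          · intro hD
            exact ⟨hxf, hD⟩
        rw [hcong]
        exact canonical_rep hsred hsnd hall V.2 _ (by intro x; simp)
      have hright : ∀ A : Set S, eF (gF A) = A := by
        intro A
        set B : ℕ → Bool := fun x => decide (∃ h : x ∈ s.toFinset, (⟨x, h⟩ : S) ∈ A) with hB
        ext i
        show Dp (gF A).1 i.1 ↔ i ∈ A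
        have hlet := letters_reduced (hDfilter B)
        have h1 : i.1 ∈ s.filter B ↔ Dp (gF A).1 i.1 := hlet i.1
        rw [← h1]
        rw [List.mem_filter]
        constructor
        · rintro ⟨_, hBi⟩
          rw [hB] at hBi
          simp only [decide_eq_true_eq] at hBi
          obtain ⟨h, hmem⟩ := hBi
          have heq : (⟨i.1, h⟩ : S) = i := Subtype.ext rfl
          rwa [heq] at hmem
        · intro hiA
          refine ⟨List.mem_toFinset.mp i.2, ?_⟩
          rw [hB]
          simp only [decide_eq_true_eq]
          exact ⟨i.2, hiA⟩
      have hiso : ∀ V V' : IdealB n w, IdealLE n w V V' ↔ eF V ⊆ eF V' := by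
        intro V V'
        constructor
        · rintro ⟨u, u', hured, hu'red, husub⟩
          intro i hi
          have hDu : Dp V.1 i.1 := hi
          have hlu := letters_reduced (hured.1.2 ▸ hured) i.1
          rw [hured.1.2] at hlu
          have hlu' := letters_reduced (hu'red.1.2 ▸ hu'red) i.1
          rw [hu'red.1.2] at hlu'
          exact hlu'.mp (husub.subset (hlu.mpr hDu))
        · intro hsub
          set AV : ℕ → Bool := fun x => decide (Dp V.1 x) with hAV
          set AV' : ℕ → Bool := fun x => decide (Dp V'.1 x) with hAV'
          have hV := canonical_rep hsred hsnd hall V.2 AV (by intro x; rw [hAV]; simp)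
          have hV' := canonical_rep hsred hsnd hall V'.2 AV' (by intro x; rw [hAV']; simp)
          have hsubfil : (s.filter AV).Sublist (s.filter AV') := by
            have heq2 : s.filter AV = (s.filter AV').filter AV := by
              rw [List.filter_filter]
              apply List.filter_congr
              intro x hx
              rw [hAV, hAV']
              rcases Classical.em (Dp V.1 x) with hD | hD
              · have hD' : Dp V'.1 x := by
                  have : (⟨x, List.mem_toFinset.mpr hx⟩ : S) ∈ eF V := hD
                  exact hsub this
                simp [hD, hD']
              · simp [hD]
            rw [heq2]
            exact List.filter_sublist
          exact ⟨s.filter AV, s.filter AV',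
            hV ▸ hDfilter AV, hV' ▸ hDfilter AV', hsubfil⟩
      exact ⟨⟨eF, gF, hleft, hright⟩, hiso⟩
  exact ⟨part1, part2, part3⟩
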